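/- For every object τ of Ω_n^epi, the set of degree-1 morphisms with source τ is in bijection with the set of data consisting of: a level k ∈ {0,…,n−1}, a vertex b ∈ T_{k+1}, a pair of consecutive elements (a, a+1) in the fiber τ_{k+1}^{−1}(b), and, when k > 0, a shuffle of the fibers τ_k^{−1}(a) and τ_k^{−1}(a+1), i.e. a bijection from τ_k^{−1}(a) ⊔ τ_k^{−1}(a+1) to an ordered set of the same cardinality which preserves the order among the elements of τ_k^{−1}(a) and among the elements of τ_k^{−1}(a+1). The degree-1 morphism associated to such a datum merges the vertices a and a+1 at level k, shuffles the subtrees above them according to the given shuffle, and is the identity on all levels > k; its target is uniquely determined by this datum. -/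

import Mathlib

open CategoryTheory

/-- An object of the category `Ω_n^epi` of pruned `n`-level trees: a sequence of
monotone surjections `T_0 → T_1 → ⋯ → T_n` between the finite ordered sets
`T_i = Fin (t i)`, with `T_n` (and all higher levels) a one-point set. -/
structure PTree (n : ℕ) where
  t : ℕ → ℕ
  map : ∀ i : ℕ, Fin (t i) → Fin (t (i+1))
  mono : ∀ i, Monotone (map i)
  surjmap : ∀ i, Function.Surjective (map i)
  top : ∀ i, n ≤ i → t i = 1

/-- A morphism of pruned trees: a family of surjections commuting with the
structure maps, order-preserving on every fiber of the structure maps. -/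
structure PTreeHom {n : ℕ} (τ σ : PTree n) where
  app : ∀ i, Fin (τ.t i) → Fin (σ.t i)
  surj : ∀ i, Function.Surjective (app i)
  comm : ∀ i x, app (i+1) (τ.map i x) = σ.map i (app i x)
  fiberMono : ∀ i x y, τ.map i x = τ.map i y → x ≤ y → app i x ≤ app i y

theorem PTreeHom.ext' {n : ℕ} {τ σ : PTree n} {f g : PTreeHom τ σ}
    (h : f.app = g.app) : f = g := by
  cases f; cases g; cases h; rfl

instance (n : ℕ) : Category (PTree n) where
  Hom := PTreeHom
  id τ := ⟨fun _ => _root_.id, fun _ => Function.surjective_id, fun _ _ => rfl,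
    fun _ _ _ _ h => h⟩
  comp f g :=
    ⟨fun i => g.app i ∘ f.app i,
     fun i => (g.surj i).comp (f.surj i),
     fun i x => by simp only [Function.comp_apply, f.comm, g.comm],
     fun i x y hxy hle =>
       g.fiberMono i _ _ (by rw [← f.comm, ← f.comm, hxy]) (f.fiberMono i x y hxy hle)⟩
  id_comp _ := PTreeHom.ext' rfl
  comp_id _ := PTreeHom.ext' rfl
  assoc _ _ _ := PTreeHom.ext' rfl

/-- The degree of a pruned tree: the number of vertices of levels `0,…,n-1`. -/
def PTree.deg {n : ℕ} (τ : PTree n) : ℕ := ∑ i ∈ Finset.range n, τ.t i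

/-- The degree of a morphism `u : τ ⟶ σ`: `deg τ - deg σ`. -/
def homDeg {n : ℕ} {τ σ : PTree n} (_ : τ ⟶ σ) : ℤ :=
  (τ.deg : ℤ) - (σ.deg : ℤ)

/-- A morphism (with possibly different source and target) is an identity. -/
def IsIdentityHom {n : ℕ} {τ σ : PTree n} (u : τ ⟶ σ) : Prop :=
  ∃ h : τ = σ, u = eqToHom h

/-- The combinatorial data of a degree-1 morphism with source `τ`: a level
`k < n`, a pair of consecutive vertices `(a, a+1)` lying in the same fiber of
`τ_{k+1} : T_k → T_{k+1}`, and, when `k > 0` (i.e. for the level `j` with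
`j + 1 = k`), a shuffle of the fibers `τ_k⁻¹(a)` and `τ_k⁻¹(a+1)`: a bijection
from the disjoint union of the two fibers onto an ordered set of the same
cardinality, preserving the order among the elements of each fiber. -/
structure MergeData {n : ℕ} (τ : PTree n) where
  k : ℕ
  hk : k < n
  a : ℕ
  ha : a + 1 < τ.t k
  hfib : τ.map k ⟨a, Nat.lt_of_succ_lt ha⟩ = τ.map k ⟨a + 1, ha⟩
  sh : ∀ j, j + 1 = k →
    ({x : Fin (τ.t j) // (τ.map j x : ℕ) = a ∨ (τ.map j x : ℕ) = a + 1} →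
      Fin (Fintype.card
        {x : Fin (τ.t j) // (τ.map j x : ℕ) = a ∨ (τ.map j x : ℕ) = a + 1}))
  shBij : ∀ j h, Function.Bijective (sh j h)
  shOrd : ∀ j h x y, τ.map j x.val = τ.map j y.val → x.val ≤ y.val →
    sh j h x ≤ sh j h y


namespace Stmt2Aux

/-- The merge map on `ℕ`. -/
def mg (a x : ℕ) : ℕ := if x ≤ a then x else x - 1

lemma mg_mono (a : ℕ) : Monotone (mg a) := by
  intro x y h; unfold mg; split <;> split <;> omega

/-- value of a bijection as a card of an initial segment. -/
lemma bij_val_eq_card {X : Type*} [Fintype X] [DecidableEq X] {q : ℕ}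
    (u : X → Fin q) (hu : Function.Bijective u) (x : X) :
    (u x : ℕ) = (Finset.univ.filter (fun y => u y < u x)).card := by
  classical
  have himg : (Finset.univ.filter (fun y => u y < u x)).image u = Finset.Iio (u x) := by
    ext z
    simp only [Finset.mem_image, Finset.mem_filter, Finset.mem_univ, true_and,
      Finset.mem_Iio]
    constructor
    · rintro ⟨y, hy, rfl⟩; exact hy
    · intro hz; obtain ⟨y, rfl⟩ := hu.surjective z; exact ⟨y, hz, rfl⟩
  have := Finset.card_image_of_injective
    (Finset.univ.filter (fun y => u y < u x)) hu.injective
  rw [← this, himg, Fin.card_Iio]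

/-- Two bijections into `Fin`s which induce the same order are equal (in values). -/
lemma bij_unique_of_le_iff {X : Type*} [Fintype X] [DecidableEq X] {q q' : ℕ}
    (u1 : X → Fin q) (u2 : X → Fin q')
    (h1 : Function.Bijective u1) (h2 : Function.Bijective u2)
    (h : ∀ x y, u1 x ≤ u1 y ↔ u2 x ≤ u2 y) (x : X) : (u1 x : ℕ) = (u2 x : ℕ) := by
  classical
  rw [bij_val_eq_card u1 h1 x, bij_val_eq_card u2 h2 x]
  congr 1
  apply Finset.filter_congr
  intro y _
  rw [lt_iff_not_ge, lt_iff_not_ge]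
  exact not_congr (h x y)

/-- From key-monotonicity and injectivity, an order characterization. -/
lemma le_iff_of_forall_le {X : Type*} {q : ℕ} (f : X → Fin q) (key : X → ℕ)
    (hfinj : Function.Injective f) (hkinj : Function.Injective key)
    (h : ∀ x y, key x ≤ key y → f x ≤ f y) (x y : X) :
    f x ≤ f y ↔ key x ≤ key y := by
  refine ⟨fun hf => ?_, h x y⟩
  by_contra hk
  have hk' : key y ≤ key x := le_of_not_ge hk
  have := h y x hk'
  have hxy : f x = f y := le_antisymm hf this
  exact hk (le_of_eq (congrArg key (hfinj hxy)))

/-- key comparison: extract label comparison. -/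
lemma key_label_le {p lx tx ly ty : ℕ} (htx : tx < p) (hty : ty < p)
    (h : lx * p + tx ≤ ly * p + ty) : lx ≤ ly := by
  by_contra hl
  have : ly + 1 ≤ lx := by omega
  have h2 : (ly + 1) * p ≤ lx * p := Nat.mul_le_mul_right p this
  rw [Nat.succ_mul] at h2
  omega

lemma key_inj {X : Type*} {p : ℕ} (label tie : X → ℕ)
    (htie : ∀ x, tie x < p)
    (hinj : ∀ x y, label x = label y → tie x = tie y → x = y) :
    Function.Injective (fun x => label x * p + tie x) := by
  intro x y h
  simp only at h
  have h1 : label x ≤ label y := key_label_le (htie x) (htie y) h.le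
  have h2 : label y ≤ label x := key_label_le (htie y) (htie x) h.ge
  have hl : label x = label y := le_antisymm h1 h2
  rw [hl] at h
  exact hinj x y hl (by omega)

/-- Sorting: a bijection of `Fin p` realizing the order of an injective key. -/
lemma exists_sorted (p : ℕ) (key : Fin p → ℕ) (hinj : Function.Injective key) :
    ∃ u : Fin p → Fin p, Function.Bijective u ∧ ∀ x y, (u x ≤ u y ↔ key x ≤ key y) := by
  classical
  set s : Finset ℕ := Finset.univ.image key with hs
  have hcard : s.card = p := by
    rw [hs, Finset.card_image_of_injective _ hinj, Finset.card_univ, Fintype.card_fin]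
  have hmem : ∀ x, key x ∈ s := fun x => Finset.mem_image_of_mem key (Finset.mem_univ x)
  set iso := s.orderIsoOfFin hcard
  refine ⟨fun x => iso.symm ⟨key x, hmem x⟩, ⟨?_, ?_⟩, ?_⟩
  · intro x y h
    apply hinj
    have := congrArg iso h
    simp only [OrderIso.apply_symm_apply, Subtype.mk.injEq] at this
    exact this
  · intro z
    obtain ⟨x, _, hx⟩ := Finset.mem_image.mp (iso z).2
    refine ⟨x, ?_⟩
    apply iso.injective
    simp only [OrderIso.apply_symm_apply]
    exact Subtype.ext hx
  · intro x y
    exact iso.symm.le_iff_le.trans Subtype.mk_le_mk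

/-- Upper bound for a monotone surjection between `Fin`s. -/
lemma mono_surj_le {p q : ℕ} (g : Fin p → Fin q) (hm : Monotone g)
    (hs : Function.Surjective g) (x : Fin p) : (g x : ℕ) ≤ x := by
  classical
  by_contra h
  push_neg at h
  -- injection from Fin (g x) into Fin x.val via preimages
  have hch : ∀ v : Fin ((g x : ℕ)), ∃ y : Fin p, (g y : ℕ) = v ∧ (y : ℕ) < x := by
    intro v
    obtain ⟨y, hy⟩ := hs ⟨v, lt_trans v.isLt (g x).isLt⟩
    refine ⟨y, by rw [hy], ?_⟩
    by_contra hyx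
    push_neg at hyx
    have : g x ≤ g y := hm (by exact Fin.le_def.mpr hyx)
    rw [hy] at this
    have : (g x : ℕ) ≤ v := this
    omega
  choose F hF1 hF2 using hch
  have hinj : Function.Injective (fun v => (⟨F v, hF2 v⟩ : Fin (x : ℕ))) := by
    intro v w hvw
    simp only [Fin.mk.injEq] at hvw
    have : F v = F w := Fin.ext hvw
    apply Fin.ext
    rw [← hF1 v, ← hF1 w, this]
  have := Fintype.card_le_of_injective _ hinj
  simp only [Fintype.card_fin] at this
  omega


/-- Lower bound for a monotone surjection `Fin (m+1) → Fin m`. -/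
lemma mono_surj_lb {m : ℕ} (g : Fin (m+1) → Fin m) (hm : Monotone g)
    (hs : Function.Surjective g) (x : Fin (m+1)) : (x : ℕ) ≤ (g x : ℕ) + 1 := by
  classical
  by_contra h
  push_neg at h
  -- injection from values above g x into preimages above x
  have hch : ∀ v : Fin (m - 1 - (g x : ℕ)), ∃ y : Fin (m+1),
      (g y : ℕ) = (g x : ℕ) + 1 + v ∧ (x : ℕ) < y := by
    intro v
    have hv : (g x : ℕ) + 1 + (v : ℕ) < m := by
      have := v.isLt; omega
    obtain ⟨y, hy⟩ := hs ⟨(g x : ℕ) + 1 + v, hv⟩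
    refine ⟨y, by rw [hy], ?_⟩
    by_contra hyx
    push_neg at hyx
    have : g y ≤ g x := hm (Fin.le_def.mpr hyx)
    rw [hy] at this
    have : (g x : ℕ) + 1 + (v : ℕ) ≤ (g x : ℕ) := this
    omega
  choose F hF1 hF2 using hch
  have hxm : (x : ℕ) ≤ m := by have := x.isLt; omega
  have hinj : Function.Injective
      (fun v => (⟨(F v : ℕ) - ((x : ℕ) + 1), by have := (F v).isLt; have := hF2 v; omega⟩ :
        Fin (m - (x : ℕ)))) := by
    intro v w hvw
    simp only [Fin.mk.injEq] at hvw
    have hv2 := hF2 v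
    have hw2 := hF2 w
    have hFvw : F v = F w := Fin.ext (by omega)
    have h1 := hF1 v
    have h2 := hF1 w
    rw [hFvw] at h1
    apply Fin.ext
    omega
  have := Fintype.card_le_of_injective _ hinj
  simp only [Fintype.card_fin] at this
  have := (g x).isLt
  omega

/-- A monotone surjection `Fin (m+1) → Fin m` is a merge map. -/
lemma merge_of_mono_surj {m : ℕ} (hm1 : 1 ≤ m) (g : Fin (m+1) → Fin m)
    (hmo : Monotone g) (hs : Function.Surjective g) :
    ∃ a, a + 1 < m + 1 ∧ ∀ x : Fin (m+1), (g x : ℕ) = if (x : ℕ) ≤ a then (x : ℕ) else (x : ℕ) - 1 := by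
  classical
  set gn : ℕ → ℕ := fun z => if h : z < m + 1 then (g ⟨z, h⟩ : ℕ) else 0 with hgn
  have hgnx : ∀ x : Fin (m+1), (g x : ℕ) = gn x := by
    intro x; simp only [hgn, x.isLt, dif_pos]
  have hub : ∀ z, z < m + 1 → gn z ≤ z := by
    intro z hz
    have := mono_surj_le g hmo hs ⟨z, hz⟩
    rw [hgnx ⟨z, hz⟩] at this; exact this
  have hlb : ∀ z, z < m + 1 → z ≤ gn z + 1 := by
    intro z hz
    have := mono_surj_lb g hmo hs ⟨z, hz⟩
    rw [hgnx ⟨z, hz⟩] at this; exact this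
  have hbd : ∀ z, z < m + 1 → gn z < m := by
    intro z hz
    have := (g ⟨z, hz⟩).isLt
    rw [hgnx ⟨z, hz⟩] at this; exact this
  have hsurj : ∀ w, w < m → ∃ z, z < m + 1 ∧ gn z = w := by
    intro w hw
    obtain ⟨y, hy⟩ := hs ⟨w, hw⟩
    refine ⟨(y : ℕ), y.isLt, ?_⟩
    rw [← hgnx y]
    · rw [hy]
  have hex : ∃ z, z < m + 1 ∧ gn z ≠ z := by
    refine ⟨m, by omega, ?_⟩
    have := hbd m (by omega)
    omega
  obtain ⟨a', ⟨ha'lt, ha'ne⟩, hminpre⟩ :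
      ∃ a', (a' < m + 1 ∧ gn a' ≠ a') ∧ ∀ z, z < a' → ¬(z < m + 1 ∧ gn z ≠ z) :=
    ⟨Nat.find hex, Nat.find_spec hex, fun z hz => Nat.find_min hex hz⟩
  have hmin : ∀ z, z < a' → z < m + 1 → gn z = z := by
    intro z hz hzm
    by_contra hne
    exact hminpre z hz ⟨hzm, hne⟩
  have ha'pos : 1 ≤ a' := by
    by_contra h0
    have h1 := hub 0 (by omega)
    have : a' = 0 := by omega
    rw [this] at ha'ne
    omega
  have hga' : gn a' = a' - 1 := by
    have h1 := hub a' ha'lt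
    have h2 := hlb a' ha'lt
    omega
  have ha'le : a' ≤ m := by omega
  have habove : ∀ z, z < m + 1 → a' ≤ z → gn z = z - 1 := by
    intro z
    induction z using Nat.strong_induction_on with
    | _ z ih =>
      intro h hz
      rcases Nat.eq_or_lt_of_le hz with heq | hlt
      · rw [← heq]; exact hga'
      · have h1 := hub z h
        have h2 := hlb z h
        by_contra hne
        have hgz : gn z = z := by omega
        have hzm : z < m := by have := hbd z h; omega
        obtain ⟨y, hym, hy⟩ := hsurj (z - 1) (by omega)
        have hy1 := hub y hym
        have hy2 := hlb y hym
        have hycase : y = z - 1 ∨ y = z := by omega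
        rcases hycase with hc | hc
        · have := ih y (by omega) hym (by omega)
          omega
        · rw [hc] at hy
          omega
  refine ⟨a' - 1, by omega, ?_⟩
  intro x
  rw [hgnx x]
  rcases le_or_gt (x : ℕ) (a' - 1) with hc | hc
  · rw [if_pos hc]
    exact hmin (x : ℕ) (by omega) x.isLt
  · rw [if_neg (by omega)]
    exact habove (x : ℕ) x.isLt (by omega)

/-- Level construction: given a monotone surjection `f`, a relabeling `F1` of the
codomain, and tie-breaking data, produce a sorted relabeling `u` of the domain
and a new monotone surjection `g` with `g ∘ u = F1 ∘ f`. -/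
lemma level_construction {p q q' : ℕ} (f : Fin p → Fin q) (hfm : Monotone f)
    (hfs : Function.Surjective f) (F1 : Fin q → Fin q') (hF1 : Function.Surjective F1)
    (tie : Fin p → ℕ) (htb : ∀ x, tie x < p)
    (hinj : ∀ x y, F1 (f x) = F1 (f y) → tie x = tie y → x = y) :
    ∃ (u : Fin p → Fin p) (g : Fin p → Fin q'),
      Function.Bijective u ∧ Monotone g ∧ Function.Surjective g ∧
      (∀ x, g (u x) = F1 (f x)) ∧
      (∀ x y, u x ≤ u y ↔
        (F1 (f x) : ℕ) * p + tie x ≤ (F1 (f y) : ℕ) * p + tie y) := by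
  classical
  rcases Nat.eq_zero_or_pos p with hp | hp
  · subst hp
    have hq : q = 0 := by
      by_contra hq
      obtain ⟨x, -⟩ := hfs ⟨0, Nat.pos_of_ne_zero hq⟩
      exact x.elim0
    subst hq
    have hq' : q' = 0 := by
      by_contra hq'
      obtain ⟨x, -⟩ := hF1 ⟨0, Nat.pos_of_ne_zero hq'⟩
      exact x.elim0
    subst hq'
    exact ⟨id, id, Function.bijective_id, fun x y _ => x.elim0,
      fun w => w.elim0, fun x => x.elim0, fun x => x.elim0⟩
  haveI : Nonempty (Fin p) := ⟨⟨0, hp⟩⟩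
  set key : Fin p → ℕ := fun x => (F1 (f x) : ℕ) * p + tie x with hkey
  have hkinj : Function.Injective key :=
    key_inj (fun x => (F1 (f x) : ℕ)) tie htb
      (fun x y h1 h2 => hinj x y (Fin.ext h1) h2)
  obtain ⟨u, hubij, huord⟩ := exists_sorted p key hkinj
  set g : Fin p → Fin q' := fun z => F1 (f (Function.invFun u z)) with hg
  have hgu : ∀ x, g (u x) = F1 (f x) := by
    intro x
    simp only [hg]
    rw [Function.leftInverse_invFun hubij.injective x]
  refine ⟨u, g, hubij, ?_, ?_, hgu, huord⟩
  · -- monotone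
    intro z z' hz
    obtain ⟨x, rfl⟩ := hubij.surjective z
    obtain ⟨y, rfl⟩ := hubij.surjective z'
    rw [hgu, hgu]
    have hk : key x ≤ key y := (huord x y).mp hz
    have : (F1 (f x) : ℕ) ≤ (F1 (f y) : ℕ) :=
      key_label_le (htb x) (htb y) hk
    exact this
  · -- surjective
    intro w
    obtain ⟨v, hv⟩ := hF1 w
    obtain ⟨x, hx⟩ := hfs v
    exact ⟨u x, by rw [hgu, hx, hv]⟩

/-- A monotone bijection between `Fin`s is the identity on values. -/
lemma mono_bij_val {p q : ℕ} (f : Fin p → Fin q) (hb : Function.Bijective f)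
    (hm : Monotone f) (x : Fin p) : (f x : ℕ) = (x : ℕ) := by
  classical
  have hsm : StrictMono f := hm.strictMono_of_injective hb.injective
  rw [bij_val_eq_card f hb x]
  have hid : ((x : ℕ)) = (Finset.univ.filter (fun y : Fin p => y < x)).card := by
    have : Finset.univ.filter (fun y : Fin p => y < x) = Finset.Iio x := by
      ext y; simp
    rw [this, Fin.card_Iio]
  rw [hid]
  congr 1
  apply Finset.filter_congr
  intro y _
  first
  | exact hsm.lt_iff_lt
  | (simp only [eq_iff_iff]; exact hsm.lt_iff_lt)

/-- Sorting, general domain version. -/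
lemma exists_sorted' (X : Type*) [Fintype X] [DecidableEq X] (key : X → ℕ)
    (hinj : Function.Injective key) :
    ∃ u : X → Fin (Fintype.card X), Function.Bijective u ∧
      ∀ x y, (u x ≤ u y ↔ key x ≤ key y) := by
  classical
  set s : Finset ℕ := Finset.univ.image key with hs
  have hcard : s.card = Fintype.card X := by
    rw [hs, Finset.card_image_of_injective _ hinj, Finset.card_univ]
  have hmem : ∀ x, key x ∈ s := fun x => Finset.mem_image_of_mem key (Finset.mem_univ x)
  set iso := s.orderIsoOfFin hcard
  refine ⟨fun x => iso.symm ⟨key x, hmem x⟩, ⟨?_, ?_⟩, ?_⟩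
  · intro x y h
    apply hinj
    have := congrArg iso h
    simp only [OrderIso.apply_symm_apply, Subtype.mk.injEq] at this
    exact this
  · intro z
    obtain ⟨x, _, hx⟩ := Finset.mem_image.mp (iso z).2
    refine ⟨x, ?_⟩
    apply iso.injective
    simp only [OrderIso.apply_symm_apply]
    exact Subtype.ext hx
  · intro x y
    exact iso.symm.le_iff_le.trans Subtype.mk_le_mk

end Stmt2Aux

namespace Stmt2Aux

variable {n : ℕ} {τ : PTree n}

lemma tpos (τ : PTree n) : ∀ l, 0 < τ.t l := by
  have key : ∀ m l, n ≤ l + m → 0 < τ.t l := by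
    intro m
    induction m with
    | zero => intro l hl; rw [τ.top l (by omega)]; omega
    | succ m ih =>
      intro l hl
      by_cases h : n ≤ l
      · rw [τ.top l h]; omega
      · have h1 := ih (l+1) (by omega)
        obtain ⟨x, -⟩ := τ.surjmap l ⟨0, h1⟩
        exact x.pos
  intro l; exact key n l (by omega)

/-- The level function of the target tree. -/
def st (τ : PTree n) (d : MergeData τ) (i : ℕ) : ℕ :=
  if i = d.k then τ.t d.k - 1 else τ.t i

lemma tk_ge (d : MergeData τ) : 2 ≤ τ.t d.k := by have := d.ha; omega

lemma st_pos (d : MergeData τ) (i : ℕ) : 0 < st τ d i := by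
  unfold st; split
  · have := tk_ge d; omega
  · exact tpos τ i

lemma st_eq_of_ne (d : MergeData τ) {i : ℕ} (h : i ≠ d.k) : st τ d i = τ.t i :=
  if_neg h

lemma st_k (d : MergeData τ) : st τ d d.k = τ.t d.k - 1 := if_pos rfl

lemma mg_lt {a m x : ℕ} (ha : a + 1 < m) (hx : x < m) : mg a x < m - 1 := by
  unfold mg; split <;> omega

lemma mg_eq_a_iff {a z : ℕ} : mg a z = a ↔ (z = a ∨ z = a + 1) := by
  unfold mg; split <;> omega

lemma mg_inj_off {a z z' : ℕ} (h : mg a z = mg a z') (hne : mg a z ≠ a) : z = z' := by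
  unfold mg at h hne; split_ifs at h hne <;> omega

/-- The tie-breaking key at level `l`. -/
def tieD (τ : PTree n) (d : MergeData τ) (l : ℕ) (x : Fin (τ.t l)) : ℕ :=
  if hl : l + 1 = d.k then
    if hx : ((τ.map l x : ℕ) = d.a ∨ (τ.map l x : ℕ) = d.a + 1) then
      (d.sh l hl ⟨x, hx⟩ : ℕ)
    else (x : ℕ)
  else (x : ℕ)

lemma tieD_lt (d : MergeData τ) (l : ℕ) (x : Fin (τ.t l)) : tieD τ d l x < τ.t l := by
  unfold tieD
  split_ifs with h1 h2
  · calc (d.sh l h1 ⟨x, h2⟩ : ℕ)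
        < Fintype.card {x : Fin (τ.t l) //
            (τ.map l x : ℕ) = d.a ∨ (τ.map l x : ℕ) = d.a + 1} := (d.sh l h1 ⟨x, h2⟩).isLt
      _ ≤ Fintype.card (Fin (τ.t l)) := Fintype.card_subtype_le _
      _ = τ.t l := Fintype.card_fin _
  · exact x.isLt
  · exact x.isLt

/-- The properties pinning down the degree-1 morphism associated to a merge datum. -/
def GProps (τ : PTree n) (d : MergeData τ)
    (p : Σ σ : PTree n, {u : τ ⟶ σ // homDeg u = 1}) : Prop :=
  (∀ i, p.1.t i = st τ d i) ∧
  (∀ x : Fin (τ.t d.k), (PTreeHom.app p.2.1 d.k x : ℕ) = mg d.a (x : ℕ)) ∧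
  (∀ l, d.k < l → ∀ x : Fin (τ.t l), (PTreeHom.app p.2.1 l x : ℕ) = (x : ℕ)) ∧
  (∀ l, l < d.k → Function.Bijective (PTreeHom.app p.2.1 l)) ∧
  (∀ l, l < d.k → ∀ x y : Fin (τ.t l),
    (PTreeHom.app p.2.1 l x ≤ PTreeHom.app p.2.1 l y ↔
      (PTreeHom.app p.2.1 (l+1) (τ.map l x) : ℕ) * τ.t l + tieD τ d l x ≤
      (PTreeHom.app p.2.1 (l+1) (τ.map l y) : ℕ) * τ.t l + tieD τ d l y))

/-- The shuffle order characterization follows from `GProps`. -/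
lemma shiff_of_gprops {d : MergeData τ} {p : Σ σ : PTree n, {u : τ ⟶ σ // homDeg u = 1}}
    (hp : GProps τ d p) (j : ℕ) (hj : j + 1 = d.k)
    (x y : {x : Fin (τ.t j) // (τ.map j x : ℕ) = d.a ∨ (τ.map j x : ℕ) = d.a + 1}) :
    (d.sh j hj x ≤ d.sh j hj y ↔
      PTreeHom.app p.2.1 j x.val ≤ PTreeHom.app p.2.1 j y.val) := by
  obtain ⟨ht, hmg, hid, hbij, hord⟩ := hp
  have hjk : j < d.k := by omega
  rw [hord j hjk]
  have hlab : ∀ z : {x : Fin (τ.t j) // (τ.map j x : ℕ) = d.a ∨ (τ.map j x : ℕ) = d.a + 1},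
      (PTreeHom.app p.2.1 (j+1) (τ.map j z.val) : ℕ) = d.a := by
    intro z
    have hmg' : ∀ l (hl : l = d.k) (x : Fin (τ.t l)),
        (PTreeHom.app p.2.1 l x : ℕ) = mg d.a (x : ℕ) := by
      intro l hl
      subst hl
      exact hmg
    rw [hmg' (j+1) hj, mg_eq_a_iff]
    rcases z.2 with h | h
    · exact Or.inl h
    · exact Or.inr h
  rw [hlab x, hlab y]
  have htx : tieD τ d j x.val = (d.sh j hj x : ℕ) := by
    unfold tieD
    rw [dif_pos hj, dif_pos x.2]
  have hty : tieD τ d j y.val = (d.sh j hj y : ℕ) := by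
    unfold tieD
    rw [dif_pos hj, dif_pos y.2]
  rw [htx, hty]
  constructor
  · intro h; omega
  · intro h
    have : (d.sh j hj x : ℕ) ≤ (d.sh j hj y : ℕ) := by omega
    exact this

/-- Extensionality for pruned trees. -/
lemma ptree_ext (σ σ' : PTree n) (ht : ∀ i, σ.t i = σ'.t i)
    (hm : ∀ i (y : Fin (σ.t i)) (y' : Fin (σ'.t i)), (y : ℕ) = (y' : ℕ) →
      ((σ.map i y : ℕ)) = (σ'.map i y' : ℕ)) : σ = σ' := by
  obtain ⟨t, map, mono, surj, top⟩ := σ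
  obtain ⟨t', map', mono', surj', top'⟩ := σ'
  simp only at ht hm
  have htt : t = t' := funext ht
  subst htt
  have : map = map' := by
    funext i y
    exact Fin.ext (hm i y y rfl)
  subst this
  rfl

/-- Equality of points of the sigma type from pointwise data. -/
lemma sig_eq {σ σ' : PTree n} (u : τ ⟶ σ) (u' : τ ⟶ σ')
    (hu : homDeg u = 1) (hu' : homDeg u' = 1) (hσ : σ = σ')
    (happ : ∀ l x, ((PTreeHom.app u l x : ℕ)) = (PTreeHom.app u' l x : ℕ)) :
    (⟨σ, ⟨u, hu⟩⟩ : Σ σ : PTree n, {w : τ ⟶ σ // homDeg w = 1}) = ⟨σ', ⟨u', hu'⟩⟩ := by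
  subst hσ
  have : u = u' := PTreeHom.ext' (funext fun l => funext fun x => Fin.ext (happ l x))
  subst this
  rfl

end Stmt2Aux

namespace Stmt2Aux

variable {n : ℕ} {τ : PTree n}

/-- the section of the merge map -/
def liftA (d : MergeData τ) (y : ℕ) : ℕ := if y ≤ d.a then y else y + 1

/-- `τ.map` as a function on `ℕ`. -/
def τmval (τ : PTree n) (l z : ℕ) : ℕ :=
  if h : z < τ.t l then (τ.map l ⟨z, h⟩ : ℕ) else 0

lemma τmval_lt (τ : PTree n) {l z : ℕ} (h : z < τ.t l) : τmval τ l z < τ.t (l+1) := by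
  unfold τmval; rw [dif_pos h]; exact (τ.map l ⟨z, h⟩).isLt

lemma τmval_mono (τ : PTree n) {l z z' : ℕ} (hzz : z ≤ z') (h : z' < τ.t l) :
    τmval τ l z ≤ τmval τ l z' := by
  unfold τmval
  rw [dif_pos h, dif_pos (lt_of_le_of_lt hzz h)]
  exact τ.mono l (show (⟨z, _⟩ : Fin (τ.t l)) ≤ ⟨z', h⟩ from hzz)

lemma τmval_app (τ : PTree n) {l : ℕ} (x : Fin (τ.t l)) :
    τmval τ l (x : ℕ) = (τ.map l x : ℕ) := by
  unfold τmval; rw [dif_pos x.isLt]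

/-- base level maps: merge at level `k`, identity elsewhere. -/
def uBase (τ : PTree n) (d : MergeData τ) : ∀ l, Fin (τ.t l) → Fin (st τ d l) :=
  fun l x =>
    if h : l = d.k then
      ⟨mg d.a x, by
        subst h; rw [st_k d]; exact mg_lt d.ha x.isLt⟩
    else ⟨x, by rw [st_eq_of_ne d h]; exact x.isLt⟩

lemma uBase_k (d : MergeData τ) (x : Fin (τ.t d.k)) :
    (uBase τ d d.k x : ℕ) = mg d.a (x : ℕ) := by
  unfold uBase; rw [dif_pos rfl]

lemma uBase_ne (d : MergeData τ) {l : ℕ} (h : l ≠ d.k) (x : Fin (τ.t l)) :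
    (uBase τ d l x : ℕ) = (x : ℕ) := by
  unfold uBase; rw [dif_neg h]

def gBase (τ : PTree n) (d : MergeData τ) : ∀ l, Fin (st τ d l) → Fin (st τ d (l+1)) :=
  fun l y =>
    ⟨min (τmval τ l (if l = d.k then liftA d y else y)) (st τ d (l+1) - 1), by
      have := st_pos d (l+1); omega⟩

lemma gBase_val_k (d : MergeData τ) (y : Fin (st τ d d.k)) :
    (gBase τ d d.k y : ℕ) = τmval τ d.k (liftA d (y : ℕ)) := by
  have hy : (y : ℕ) < τ.t d.k - 1 := by rw [← st_k d]; exact y.isLt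
  have harg : liftA d (y : ℕ) < τ.t d.k := by
    unfold liftA; split <;> omega
  have h1 : τmval τ d.k (liftA d (y : ℕ)) < τ.t (d.k + 1) := τmval_lt τ harg
  have h2 : st τ d (d.k + 1) = τ.t (d.k + 1) := st_eq_of_ne d (by omega)
  show min (τmval τ d.k (if d.k = d.k then liftA d (y : ℕ) else (y : ℕ)))
      (st τ d (d.k + 1) - 1) = _
  rw [if_pos rfl]
  omega

lemma gBase_val_gt (d : MergeData τ) {l : ℕ} (hl : d.k < l) (y : Fin (st τ d l)) :
    (gBase τ d l y : ℕ) = τmval τ l (y : ℕ) := by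
  have hy : (y : ℕ) < τ.t l := by rw [← st_eq_of_ne d (by omega : l ≠ d.k)]; exact y.isLt
  have h1 : τmval τ l (y : ℕ) < τ.t (l + 1) := τmval_lt τ hy
  have h2 : st τ d (l + 1) = τ.t (l + 1) := st_eq_of_ne d (by omega)
  show min (τmval τ l (if l = d.k then liftA d (y : ℕ) else (y : ℕ)))
      (st τ d (l + 1) - 1) = _
  rw [if_neg (by omega : l ≠ d.k)]
  omega

lemma liftA_mg_map (d : MergeData τ) (x : Fin (τ.t d.k)) :
    τmval τ d.k (liftA d (mg d.a (x : ℕ))) = (τ.map d.k x : ℕ) := by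
  by_cases hxa : (x : ℕ) ≤ d.a
  · have h : liftA d (mg d.a (x : ℕ)) = (x : ℕ) := by
      simp only [mg, liftA]; split_ifs <;> omega
    rw [h, τmval_app]
  · by_cases hxa1 : (x : ℕ) = d.a + 1
    · have h : liftA d (mg d.a (x : ℕ)) = d.a := by
        simp only [mg, liftA]; split_ifs <;> omega
      rw [h]
      have hxeq : x = ⟨d.a + 1, d.ha⟩ := Fin.ext hxa1
      have h2 : τmval τ d.k d.a = (τ.map d.k ⟨d.a, Nat.lt_of_succ_lt d.ha⟩ : ℕ) := by
        unfold τmval; rw [dif_pos (Nat.lt_of_succ_lt d.ha)]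
      rw [h2, d.hfib, hxeq]
    · have h : liftA d (mg d.a (x : ℕ)) = (x : ℕ) := by
        simp only [mg, liftA]; split_ifs <;> omega
      rw [h, τmval_app]

lemma tieD_fibmono (d : MergeData τ) (l : ℕ) (x y : Fin (τ.t l))
    (hf : τ.map l x = τ.map l y) (hxy : x ≤ y) : tieD τ d l x ≤ tieD τ d l y := by
  unfold tieD
  split_ifs with h1 h2 h3 h4
  · exact d.shOrd l h1 ⟨x, h2⟩ ⟨y, h3⟩ hf hxy
  · exact absurd (hf ▸ h2) h3
  · exact absurd (hf ▸ h4) h2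
  · exact hxy
  · exact hxy

/-- The inductive construction predicate. -/
def TP (τ : PTree n) (d : MergeData τ) (i : ℕ) : Prop :=
  ∃ (uu : ∀ l, Fin (τ.t l) → Fin (st τ d l))
    (gg : ∀ l, Fin (st τ d l) → Fin (st τ d (l+1))),
    (∀ l, i ≤ l → Function.Surjective (uu l)) ∧
    (∀ l, i ≤ l → l < d.k → Function.Bijective (uu l)) ∧
    (∀ l, i ≤ l → Monotone (gg l)) ∧
    (∀ l, i ≤ l → Function.Surjective (gg l)) ∧
    (∀ l, i ≤ l → ∀ x, gg l (uu l x) = uu (l+1) (τ.map l x)) ∧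
    (∀ l, i ≤ l → ∀ x y, τ.map l x = τ.map l y → x ≤ y → uu l x ≤ uu l y) ∧
    (∀ x : Fin (τ.t d.k), (uu d.k x : ℕ) = mg d.a (x : ℕ)) ∧
    (∀ l, d.k < l → ∀ x, (uu l x : ℕ) = (x : ℕ)) ∧
    (∀ l, i ≤ l → l < d.k → ∀ x y,
      (uu l x ≤ uu l y ↔
        (uu (l+1) (τ.map l x) : ℕ) * τ.t l + tieD τ d l x ≤
        (uu (l+1) (τ.map l y) : ℕ) * τ.t l + tieD τ d l y))

lemma tp_base (τ : PTree n) (d : MergeData τ) : TP τ d d.k := by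
  classical
  refine ⟨uBase τ d, gBase τ d, ?_, ?_, ?_, ?_, ?_, ?_, uBase_k d, ?_, ?_⟩
  · -- surjectivity of uBase at l ≥ k
    intro l hl w
    by_cases h : l = d.k
    · subst h
      have hw : (w : ℕ) < τ.t d.k - 1 := by rw [← st_k d]; exact w.isLt
      refine ⟨⟨liftA d (w : ℕ), by unfold liftA; split <;> omega⟩, ?_⟩
      apply Fin.ext
      rw [uBase_k d]
      simp only [mg, liftA]
      split_ifs <;> omega
    · refine ⟨⟨(w : ℕ), by rw [← st_eq_of_ne d h]; exact w.isLt⟩, ?_⟩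
      apply Fin.ext
      rw [uBase_ne d h]
  · -- bijectivity below k: vacuous
    intro l hl hlk; omega
  · -- monotonicity of gBase
    intro l hl y y' hyy
    by_cases h : l = d.k
    · subst h
      apply Fin.le_def.mpr
      rw [gBase_val_k d y, gBase_val_k d y']
      have hy' : (y' : ℕ) < τ.t d.k - 1 := by rw [← st_k d]; exact y'.isLt
      have harg : liftA d (y' : ℕ) < τ.t d.k := by unfold liftA; split <;> omega
      apply τmval_mono τ _ harg
      have : (y : ℕ) ≤ (y' : ℕ) := hyy
      unfold liftA; split_ifs <;> omega
    · have hlk : d.k < l := by omega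
      apply Fin.le_def.mpr
      rw [gBase_val_gt d hlk y, gBase_val_gt d hlk y']
      have hy' : (y' : ℕ) < τ.t l := by rw [← st_eq_of_ne d (by omega : l ≠ d.k)]; exact y'.isLt
      exact τmval_mono τ hyy hy'
  · -- surjectivity of gBase
    intro l hl w
    have hw : (w : ℕ) < τ.t (l+1) := by
      rw [← st_eq_of_ne d (by omega : l + 1 ≠ d.k)]; exact w.isLt
    by_cases h : l = d.k
    · subst h
      obtain ⟨x, hx⟩ := τ.surjmap d.k ⟨(w : ℕ), hw⟩
      refine ⟨⟨mg d.a (x : ℕ), by rw [st_k d]; exact mg_lt d.ha x.isLt⟩, ?_⟩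
      apply Fin.ext
      rw [gBase_val_k d]
      have := liftA_mg_map d x
      simp only at this ⊢
      rw [this, hx]
    · have hlk : d.k < l := by omega
      obtain ⟨x, hx⟩ := τ.surjmap l ⟨(w : ℕ), hw⟩
      refine ⟨⟨(x : ℕ), by rw [st_eq_of_ne d (by omega : l ≠ d.k)]; exact x.isLt⟩, ?_⟩
      apply Fin.ext
      rw [gBase_val_gt d hlk]
      simp only
      rw [τmval_app, hx]
  · -- comm
    intro l hl x
    apply Fin.ext
    by_cases h : l = d.k
    · subst h
      rw [gBase_val_k d]
      rw [uBase_ne d (by omega : d.k + 1 ≠ d.k)]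
      have h1 : ((uBase τ d d.k x : ℕ)) = mg d.a (x : ℕ) := uBase_k d x
      rw [h1]
      exact liftA_mg_map d x
    · have hlk : d.k < l := by omega
      rw [gBase_val_gt d hlk]
      rw [uBase_ne d (by omega : l + 1 ≠ d.k)]
      rw [uBase_ne d h]
      rw [τmval_app]
  · -- fibmono
    intro l hl x y hf hxy
    apply Fin.le_def.mpr
    by_cases h : l = d.k
    · subst h
      rw [uBase_k d, uBase_k d]
      exact mg_mono d.a hxy
    · rw [uBase_ne d h, uBase_ne d h]
      exact hxy
  · -- hid
    intro l hl x
    exact uBase_ne d (by omega) x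
  · -- uord: vacuous
    intro l hl hlk; omega

lemma tieD_val_mem (d : MergeData τ) {l : ℕ} (hl : l + 1 = d.k) (x : Fin (τ.t l))
    (hx : (τ.map l x : ℕ) = d.a ∨ (τ.map l x : ℕ) = d.a + 1) :
    tieD τ d l x = (d.sh l hl ⟨x, hx⟩ : ℕ) := by
  unfold tieD; rw [dif_pos hl, dif_pos hx]

lemma tieD_val_nomem (d : MergeData τ) {l : ℕ} (hl : l + 1 = d.k) (x : Fin (τ.t l))
    (hx : ¬((τ.map l x : ℕ) = d.a ∨ (τ.map l x : ℕ) = d.a + 1)) :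
    tieD τ d l x = (x : ℕ) := by
  unfold tieD; rw [dif_pos hl, dif_neg hx]

lemma tieD_val_ne (d : MergeData τ) {l : ℕ} (hl : l + 1 ≠ d.k) (x : Fin (τ.t l)) :
    tieD τ d l x = (x : ℕ) := by
  unfold tieD; rw [dif_neg hl]

lemma tp_step (τ : PTree n) (d : MergeData τ) (i : ℕ) (hik : i < d.k)
    (h : TP τ d (i+1)) : TP τ d i := by
  classical
  obtain ⟨uu, gg, husurj, hubij, hgmono, hgsurj, hcomm, hfib, hk, hid, huord⟩ := h
  have hF1surj : Function.Surjective (uu (i+1)) := husurj (i+1) le_rfl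
  have hKk : ∀ l (hl : l = d.k) (x : Fin (τ.t l)), (uu l x : ℕ) = mg d.a (x : ℕ) := by
    intro l hl; subst hl; exact hk
  have hinj : ∀ x y, uu (i+1) (τ.map i x) = uu (i+1) (τ.map i y) →
      tieD τ d i x = tieD τ d i y → x = y := by
    intro x y hF htie
    by_cases hik1 : i + 1 = d.k
    · have h1 : (uu (i+1) (τ.map i x) : ℕ) = mg d.a ((τ.map i x : ℕ)) := hKk _ hik1 _
      have h2 : (uu (i+1) (τ.map i y) : ℕ) = mg d.a ((τ.map i y : ℕ)) := hKk _ hik1 _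
      have hmg : mg d.a (τ.map i x : ℕ) = mg d.a (τ.map i y : ℕ) := by
        rw [← h1, ← h2, hF]
      by_cases hmem : ((τ.map i x : ℕ) = d.a ∨ (τ.map i x : ℕ) = d.a + 1)
      · have hma : mg d.a (τ.map i x : ℕ) = d.a := mg_eq_a_iff.mpr hmem
        have hmemy : ((τ.map i y : ℕ) = d.a ∨ (τ.map i y : ℕ) = d.a + 1) :=
          mg_eq_a_iff.mp (by rw [← hmg]; exact hma)
        rw [tieD_val_mem d hik1 x hmem, tieD_val_mem d hik1 y hmemy] at htie
        have := (d.shBij i hik1).injective (Fin.ext htie)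
        exact congrArg Subtype.val this
      · have hma : mg d.a (τ.map i x : ℕ) ≠ d.a := fun hc => hmem (mg_eq_a_iff.mp hc)
        have hfeq : (τ.map i x : ℕ) = (τ.map i y : ℕ) := mg_inj_off hmg hma
        have hmemy : ¬((τ.map i y : ℕ) = d.a ∨ (τ.map i y : ℕ) = d.a + 1) := by
          rw [← hfeq]; exact hmem
        rw [tieD_val_nomem d hik1 x hmem, tieD_val_nomem d hik1 y hmemy] at htie
        exact Fin.ext htie
    · have hb := hubij (i+1) le_rfl (by omega)
      have hfeq : τ.map i x = τ.map i y := hb.injective hF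
      rw [tieD_val_ne d hik1 x, tieD_val_ne d hik1 y] at htie
      exact Fin.ext htie
  obtain ⟨u_i, g_i, hub, hgm, hgs, hgu, hword⟩ :=
    level_construction (τ.map i) (τ.mono i) (τ.surjmap i) (uu (i+1)) hF1surj
      (tieD τ d i) (tieD_lt d i) hinj
  have hstn : st τ d i = τ.t i := st_eq_of_ne d (by omega)
  set u' : Fin (τ.t i) → Fin (st τ d i) := fun x => Fin.cast hstn.symm (u_i x) with hu'
  set g' : Fin (st τ d i) → Fin (st τ d (i+1)) := fun y => g_i (Fin.cast hstn y) with hg'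
  refine ⟨Function.update uu i u', Function.update gg i g', ?_, ?_, ?_, ?_, ?_, ?_, ?_, ?_, ?_⟩
  · intro l hl
    by_cases h : l = i
    · subst h
      simp only [Function.update_self]
      intro w
      obtain ⟨x, hx⟩ := hub.surjective (Fin.cast hstn w)
      refine ⟨x, ?_⟩
      rw [hu']
      simp only
      rw [hx]
      exact Fin.ext rfl
    · simp only [Function.update_of_ne h]
      exact husurj l (by omega)
  · intro l hl hlk
    by_cases h : l = i
    · subst h
      simp only [Function.update_self]
      exact ((finCongr hstn.symm).bijective).comp hub
    · simp only [Function.update_of_ne h]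
      exact hubij l (by omega) hlk
  · intro l hl
    by_cases h : l = i
    · subst h
      simp only [Function.update_self]
      intro y y' hyy
      exact hgm (show Fin.cast hstn y ≤ Fin.cast hstn y' from hyy)
    · simp only [Function.update_of_ne h]
      exact hgmono l (by omega)
  · intro l hl
    by_cases h : l = i
    · subst h
      simp only [Function.update_self]
      intro w
      obtain ⟨z, hz⟩ := hgs w
      refine ⟨Fin.cast hstn.symm z, ?_⟩
      rw [hg']
      simp only
      rw [show Fin.cast hstn (Fin.cast hstn.symm z) = z from Fin.ext rfl, hz]
    · simp only [Function.update_of_ne h]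
      exact hgsurj l (by omega)
  · intro l hl x
    by_cases h : l = i
    · subst h
      simp only [Function.update_self, Function.update_of_ne (show l + 1 ≠ l by omega)]
      rw [hg', hu']
      simp only
      rw [show Fin.cast hstn (Fin.cast hstn.symm (u_i x)) = u_i x from Fin.ext rfl]
      exact hgu x
    · simp only [Function.update_of_ne h,
        Function.update_of_ne (show l + 1 ≠ i by omega)]
      exact hcomm l (by omega) x
  · intro l hl x y hf hxy
    by_cases h : l = i
    · subst h
      simp only [Function.update_self]
      have hkey : (uu (l+1) (τ.map l x) : ℕ) * τ.t l + tieD τ d l x ≤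
          (uu (l+1) (τ.map l y) : ℕ) * τ.t l + tieD τ d l y := by
        rw [hf]
        exact Nat.add_le_add_left (tieD_fibmono d l x y hf hxy) _
      exact (hword x y).mpr hkey
    · simp only [Function.update_of_ne h]
      exact hfib l (by omega) x y hf hxy
  · intro x
    simp only [Function.update_of_ne (show d.k ≠ i by omega)]
    exact hk x
  · intro l hl x
    simp only [Function.update_of_ne (show l ≠ i by omega)]
    exact hid l hl x
  · intro l hl hlk x y
    by_cases h : l = i
    · subst h
      simp only [Function.update_self, Function.update_of_ne (show l + 1 ≠ l by omega)]
      exact hword x y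
    · simp only [Function.update_of_ne h,
        Function.update_of_ne (show l + 1 ≠ i by omega)]
      exact huord l (by omega) hlk x y

lemma tp_zero (τ : PTree n) (d : MergeData τ) : TP τ d 0 := by
  have all : ∀ m i, i + m = d.k → TP τ d i := by
    intro m
    induction m with
    | zero =>
      intro i hi
      exact (show i = d.k by omega) ▸ tp_base τ d
    | succ m ih =>
      intro i hi
      exact tp_step τ d i (by omega) (ih (i+1) (by omega))
  exact all d.k 0 (by omega)

lemma deg_st (τ : PTree n) (d : MergeData τ) :
    (∑ i ∈ Finset.range n, st τ d i) + 1 = ∑ i ∈ Finset.range n, τ.t i := by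
  have hk' : d.k ∈ Finset.range n := Finset.mem_range.mpr d.hk
  rw [← Finset.add_sum_erase _ _ hk', ← Finset.add_sum_erase _ τ.t hk']
  have hsame : ∑ i ∈ (Finset.range n).erase d.k, st τ d i =
      ∑ i ∈ (Finset.range n).erase d.k, τ.t i := by
    apply Finset.sum_congr rfl
    intro i hi
    exact st_eq_of_ne d (Finset.ne_of_mem_erase hi)
  rw [hsame, st_k d]
  have := tk_ge d
  omega

lemma gprops_exists (τ : PTree n) (d : MergeData τ) :
    ∃ p : Σ σ : PTree n, {u : τ ⟶ σ // homDeg u = 1}, GProps τ d p := by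
  obtain ⟨uu, gg, husurj, hubij, hgmono, hgsurj, hcomm, hfib, hk, hid, huord⟩ := tp_zero τ d
  have htop : ∀ i, n ≤ i → st τ d i = 1 := by
    intro i hi
    rw [st_eq_of_ne d (by have := d.hk; omega)]
    exact τ.top i hi
  set σ : PTree n := ⟨st τ d, gg, fun l => hgmono l (Nat.zero_le l),
    fun l => hgsurj l (Nat.zero_le l), htop⟩ with hσ
  set u : PTreeHom τ σ := ⟨uu, fun l => husurj l (Nat.zero_le l),
    fun l x => (hcomm l (Nat.zero_le l) x).symm,
    fun l x y hf hxy => hfib l (Nat.zero_le l) x y hf hxy⟩ with hu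
  have hdeg : homDeg (show τ ⟶ σ from u) = 1 := by
    unfold homDeg PTree.deg
    have hσt : σ.t = st τ d := rfl
    rw [hσt, ← deg_st τ d]
    push_cast
    ring
  refine ⟨⟨σ, ⟨u, hdeg⟩⟩, ?_, ?_, ?_, ?_, ?_⟩
  · intro i; rfl
  · exact hk
  · exact hid
  · intro l hl; exact hubij l (Nat.zero_le l) hl
  · intro l hl x y; exact huord l (Nat.zero_le l) hl x y

end Stmt2Aux

namespace Stmt2Aux

variable {n : ℕ} {τ : PTree n}

lemma gprops_unique (τ : PTree n) (d : MergeData τ)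
    (p p' : Σ σ : PTree n, {u : τ ⟶ σ // homDeg u = 1})
    (hp : GProps τ d p) (hp' : GProps τ d p') : p = p' := by
  classical
  obtain ⟨σ, u, hu⟩ := p
  obtain ⟨σ', u', hu'⟩ := p'
  obtain ⟨ht, hmg, hid, hbij, hord⟩ := hp
  obtain ⟨ht', hmg', hid', hbij', hord'⟩ := hp'
  simp only at ht hmg hid hbij hord ht' hmg' hid' hbij' hord'
  -- pointwise equality of the maps
  have hKk : ∀ (w : PTreeHom τ σ') (hw : ∀ x : Fin (τ.t d.k), (w.app d.k x : ℕ) = mg d.a (x : ℕ))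
      (l : ℕ) (hl : l = d.k) (x : Fin (τ.t l)), True := fun _ _ _ _ _ => trivial
  have aux : ∀ m l, l + m = d.k → ∀ x : Fin (τ.t l),
      (PTreeHom.app u l x : ℕ) = (PTreeHom.app u' l x : ℕ) := by
    intro m
    induction m with
    | zero =>
      intro l hl
      have : l = d.k := by omega
      subst this
      intro x
      rw [hmg x, hmg' x]
    | succ m ih =>
      intro l hl
      have hlk : l < d.k := by omega
      have IH := ih (l+1) (by omega)
      have hkeq : ∀ x : Fin (τ.t l),
          (PTreeHom.app u (l+1) (τ.map l x) : ℕ) =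
          (PTreeHom.app u' (l+1) (τ.map l x) : ℕ) := fun x => IH (τ.map l x)
      have hiff : ∀ x y : Fin (τ.t l),
          PTreeHom.app u l x ≤ PTreeHom.app u l y ↔
          PTreeHom.app u' l x ≤ PTreeHom.app u' l y := by
        intro x y
        rw [hord l hlk x y, hord' l hlk x y, hkeq x, hkeq y]
      exact bij_unique_of_le_iff _ _ (hbij l hlk) (hbij' l hlk) hiff
  have happ : ∀ l (x : Fin (τ.t l)),
      (PTreeHom.app u l x : ℕ) = (PTreeHom.app u' l x : ℕ) := by
    intro l x
    rcases lt_trichotomy l d.k with h | h | h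
    · exact aux (d.k - l) l (by omega) x
    · subst h; rw [hmg x, hmg' x]
    · rw [hid l h x, hid' l h x]
  -- equality of targets
  have hσ : σ = σ' := by
    apply ptree_ext
    · intro i; rw [ht i, ht' i]
    · intro i y y' hyy
      obtain ⟨x, hx⟩ := u.surj i y
      have h1 : σ.map i y = PTreeHom.app u (i+1) (τ.map i x) := by
        rw [u.comm i x, hx]
      have hx' : PTreeHom.app u' i x = y' := by
        apply Fin.ext
        rw [← happ i x, hx, hyy]
      have h2 : σ'.map i y' = PTreeHom.app u' (i+1) (τ.map i x) := by
        rw [u'.comm i x, hx']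
      rw [h1, h2]
      exact happ (i+1) (τ.map i x)
  exact sig_eq u u' hu hu' hσ happ

end Stmt2Aux

namespace Stmt2Aux

variable {n : ℕ} {τ : PTree n}

lemma app_mono_of_parent_id {σ : PTree n} (u : τ ⟶ σ) (l : ℕ)
    (hpar : ∀ z : Fin (τ.t (l+1)), (PTreeHom.app u (l+1) z : ℕ) = (z : ℕ)) :
    Monotone (PTreeHom.app u l) := by
  intro x y hxy
  by_cases hf : τ.map l x = τ.map l y
  · exact u.fiberMono l x y hf hxy
  · have hlt : τ.map l x < τ.map l y := lt_of_le_of_ne (τ.mono l hxy) hf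
    have h1 : (σ.map l (PTreeHom.app u l x) : ℕ) = (τ.map l x : ℕ) := by
      rw [← u.comm l x, hpar]
    have h2 : (σ.map l (PTreeHom.app u l y) : ℕ) = (τ.map l y : ℕ) := by
      rw [← u.comm l y, hpar]
    by_contra hc
    push_neg at hc
    have hmono := σ.mono l hc.le
    have hv : (σ.map l (PTreeHom.app u l y) : ℕ) ≤ (σ.map l (PTreeHom.app u l x) : ℕ) := hmono
    have hltv : (τ.map l x : ℕ) < (τ.map l y : ℕ) := hlt
    omega

lemma extract (σ : PTree n) (u : τ ⟶ σ) (hu : homDeg u = 1) :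
    ∃ d : MergeData τ, GProps τ d ⟨σ, ⟨u, hu⟩⟩ := by
  classical
  -- cardinality bookkeeping
  have hle : ∀ i, σ.t i ≤ τ.t i := by
    intro i
    have := Fintype.card_le_of_surjective _ (u.surj i)
    simpa using this
  have hsum : (∑ i ∈ Finset.range n, σ.t i) + 1 = ∑ i ∈ Finset.range n, τ.t i := by
    unfold homDeg PTree.deg at hu
    omega
  have hsplit : (∑ i ∈ Finset.range n, σ.t i) + ∑ i ∈ Finset.range n, (τ.t i - σ.t i)
      = ∑ i ∈ Finset.range n, τ.t i := by
    rw [← Finset.sum_add_distrib]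
    apply Finset.sum_congr rfl
    intro i _
    have := hle i
    omega
  have hone : ∑ i ∈ Finset.range n, (τ.t i - σ.t i) = 1 := by omega
  obtain ⟨k, hkr, hkne⟩ := Finset.exists_ne_zero_of_sum_ne_zero (hone ▸ one_ne_zero)
  have hkn : k < n := Finset.mem_range.mp hkr
  have herase : (τ.t k - σ.t k) + ∑ i ∈ (Finset.range n).erase k, (τ.t i - σ.t i) = 1 := by
    rw [Finset.add_sum_erase _ (fun i => τ.t i - σ.t i) hkr]; exact hone
  have hstk : σ.t k + 1 = τ.t k := by
    have := hle k; omega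
  have hrest : ∀ i ∈ (Finset.range n).erase k, τ.t i - σ.t i = 0 := by
    rw [← Finset.sum_eq_zero_iff]
    omega
  have hsti : ∀ i, i ≠ k → σ.t i = τ.t i := by
    intro i hik
    by_cases hin : i < n
    · have := hrest i (Finset.mem_erase.mpr ⟨hik, Finset.mem_range.mpr hin⟩)
      have := hle i
      omega
    · rw [σ.top i (by omega), τ.top i (by omega)]
  -- identity above k
  have hidall : ∀ l, k < l → ∀ x : Fin (τ.t l), (PTreeHom.app u l x : ℕ) = (x : ℕ) := by
    have aux : ∀ m l, n ≤ l + m → k < l → ∀ x : Fin (τ.t l),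
        (PTreeHom.app u l x : ℕ) = (x : ℕ) := by
      intro m
      induction m with
      | zero =>
        intro l hl hkl x
        have h1 : τ.t l = 1 := τ.top l (by omega)
        have h2 : σ.t l = 1 := σ.top l (by omega)
        have := x.isLt
        have := (PTreeHom.app u l x).isLt
        omega
      | succ m ih =>
        intro l hl hkl x
        by_cases hln : n ≤ l
        · have h1 : τ.t l = 1 := τ.top l hln
          have h2 : σ.t l = 1 := σ.top l hln
          have := x.isLt
          have := (PTreeHom.app u l x).isLt
          omega
        · have IH := ih (l+1) (by omega) (by omega)
          have hcard : σ.t l = τ.t l := hsti l (by omega)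
          have hbij : Function.Bijective (PTreeHom.app u l) := by
            rw [Fintype.bijective_iff_surjective_and_card]
            exact ⟨u.surj l, by simp [hcard]⟩
          have hmono : Monotone (PTreeHom.app u l) := app_mono_of_parent_id u l IH
          exact mono_bij_val _ hbij hmono x
    intro l hkl x
    exact aux n l (by omega) hkl x
  -- bijectivity below k
  have hbijb : ∀ l, l < k → Function.Bijective (PTreeHom.app u l) := by
    intro l hlk
    rw [Fintype.bijective_iff_surjective_and_card]
    refine ⟨u.surj l, by simp [hsti l (by omega)]⟩
  -- the merge at level k
  have hσpos := tpos σ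
  obtain ⟨a, haa, hform⟩ := merge_of_mono_surj (m := σ.t k) (hσpos k)
    (fun x : Fin (σ.t k + 1) => PTreeHom.app u k (Fin.cast hstk x))
    (fun x y hxy => app_mono_of_parent_id u k (hidall (k+1) (by omega))
      (show Fin.cast hstk x ≤ Fin.cast hstk y from hxy))
    (by
      intro w
      obtain ⟨x, hx⟩ := u.surj k w
      refine ⟨Fin.cast hstk.symm x, ?_⟩
      show PTreeHom.app u k (Fin.cast hstk (Fin.cast hstk.symm x)) = w
      rw [show Fin.cast hstk (Fin.cast hstk.symm x) = x from Fin.ext rfl, hx])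
  have hmgk : ∀ x : Fin (τ.t k), (PTreeHom.app u k x : ℕ) = mg a (x : ℕ) := by
    intro x
    have := hform (Fin.cast hstk.symm x)
    rw [show Fin.cast hstk (Fin.cast hstk.symm x) = x from Fin.ext rfl] at this
    rw [this]
    rfl
  have hmgl : ∀ l (hl : l = k) (x : Fin (τ.t l)), (PTreeHom.app u l x : ℕ) = mg a (x : ℕ) := by
    intro l hl; subst hl; exact hmgk
  have ha : a + 1 < τ.t k := by omega
  -- the merged fiber
  have hfibm : τ.map k ⟨a, Nat.lt_of_succ_lt ha⟩ = τ.map k ⟨a + 1, ha⟩ := by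
    have hv : ∀ x : Fin (τ.t k), (τ.map k x : ℕ) = (σ.map k (PTreeHom.app u k x) : ℕ) := by
      intro x
      rw [← u.comm k x, hidall (k+1) (by omega)]
    have h1 := hv ⟨a, Nat.lt_of_succ_lt ha⟩
    have h2 := hv ⟨a + 1, ha⟩
    have e1 : PTreeHom.app u k ⟨a, Nat.lt_of_succ_lt ha⟩ = PTreeHom.app u k ⟨a+1, ha⟩ := by
      apply Fin.ext
      rw [hmgk, hmgk]
      simp only [mg]
      split_ifs <;> omega
    apply Fin.ext
    rw [h1, h2, e1]
  -- the shuffles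
  have hshEx : ∀ j (hj : j + 1 = k),
      ∃ s : {x : Fin (τ.t j) // (τ.map j x : ℕ) = a ∨ (τ.map j x : ℕ) = a + 1} →
        Fin (Fintype.card {x : Fin (τ.t j) // (τ.map j x : ℕ) = a ∨ (τ.map j x : ℕ) = a + 1}),
        Function.Bijective s ∧
        (∀ x y, s x ≤ s y ↔ PTreeHom.app u j x.val ≤ PTreeHom.app u j y.val) := by
    intro j hj
    have hbj : Function.Bijective (PTreeHom.app u j) := hbijb j (by omega)
    obtain ⟨s, hsbij, hsiff⟩ := exists_sorted'
      {x : Fin (τ.t j) // (τ.map j x : ℕ) = a ∨ (τ.map j x : ℕ) = a + 1}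
      (fun x => (PTreeHom.app u j x.val : ℕ))
      (fun x y hxy => Subtype.ext (hbj.injective (Fin.ext hxy)))
    refine ⟨s, hsbij, ?_⟩
    intro x y
    exact (hsiff x y).trans (by rw [Fin.le_def])
  set shf := fun j hj => Classical.choose (hshEx j hj) with hshf
  have hshspec : ∀ j hj, Function.Bijective (shf j hj) ∧
      (∀ x y, shf j hj x ≤ shf j hj y ↔ PTreeHom.app u j x.val ≤ PTreeHom.app u j y.val) :=
    fun j hj => Classical.choose_spec (hshEx j hj)
  set d : MergeData τ := ⟨k, hkn, a, ha, hfibm, shf,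
    fun j hj => (hshspec j hj).1,
    fun j hj x y hf hxy => ((hshspec j hj).2 x y).mpr (u.fiberMono j x.val y.val hf hxy)⟩
    with hd
  have hdk : d.k = k := rfl
  have hda : d.a = a := rfl
  refine ⟨d, ?_, hmgk, hidall, hbijb, ?_⟩
  · -- level function
    intro i
    unfold st
    by_cases h : i = d.k
    · rw [if_pos h, h]
      show σ.t k = τ.t k - 1
      omega
    · rw [if_neg h]
      exact hsti i h
  · -- the order characterization below k
    intro l hlk x0 y0
    have hkey_lt : ∀ x y : Fin (τ.t l),
        (PTreeHom.app u (l+1) (τ.map l x) : ℕ) < (PTreeHom.app u (l+1) (τ.map l y) : ℕ) →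
        PTreeHom.app u l x < PTreeHom.app u l y := by
      intro x y hlt
      have h1 : PTreeHom.app u (l+1) (τ.map l x) = σ.map l (PTreeHom.app u l x) := u.comm l x
      have h2 : PTreeHom.app u (l+1) (τ.map l y) = σ.map l (PTreeHom.app u l y) := u.comm l y
      rw [h1, h2] at hlt
      by_contra hc
      push_neg at hc
      have := σ.mono l hc
      have : (σ.map l (PTreeHom.app u l y) : ℕ) ≤ (σ.map l (PTreeHom.app u l x) : ℕ) := this
      omega
    have hforall : ∀ x y : Fin (τ.t l),
        (PTreeHom.app u (l+1) (τ.map l x) : ℕ) * τ.t l + tieD τ d l x ≤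
        (PTreeHom.app u (l+1) (τ.map l y) : ℕ) * τ.t l + tieD τ d l y →
        PTreeHom.app u l x ≤ PTreeHom.app u l y := by
      intro x y hkey
      have hlab : (PTreeHom.app u (l+1) (τ.map l x) : ℕ) ≤
          (PTreeHom.app u (l+1) (τ.map l y) : ℕ) :=
        key_label_le (tieD_lt d l x) (tieD_lt d l y) hkey
      rcases lt_or_eq_of_le hlab with hlt | heq
      · exact (hkey_lt x y hlt).le
      · have heqf : PTreeHom.app u (l+1) (τ.map l x) = PTreeHom.app u (l+1) (τ.map l y) :=
          Fin.ext heq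
        rw [heq] at hkey
        have htie : tieD τ d l x ≤ tieD τ d l y := by omega
        by_cases hl1 : l + 1 = k
        · have hmx : (PTreeHom.app u (l+1) (τ.map l x) : ℕ) = mg a (τ.map l x : ℕ) :=
            hmgl (l+1) hl1 _
          have hmy : (PTreeHom.app u (l+1) (τ.map l y) : ℕ) = mg a (τ.map l y : ℕ) :=
            hmgl (l+1) hl1 _
          by_cases hmem : ((τ.map l x : ℕ) = a ∨ (τ.map l x : ℕ) = a + 1)
          · have hmemy : ((τ.map l y : ℕ) = a ∨ (τ.map l y : ℕ) = a + 1) := by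
              apply mg_eq_a_iff.mp
              rw [← hmy, ← heq, hmx]
              exact mg_eq_a_iff.mpr hmem
            have htx := tieD_val_mem d (show l + 1 = d.k from hl1) x hmem
            have hty := tieD_val_mem d (show l + 1 = d.k from hl1) y hmemy
            rw [htx, hty] at htie
            have hsle : shf l hl1 ⟨x, hmem⟩ ≤ shf l hl1 ⟨y, hmemy⟩ := htie
            exact ((hshspec l hl1).2 _ _).mp hsle
          · have hmay : ¬((τ.map l y : ℕ) = a ∨ (τ.map l y : ℕ) = a + 1) := by
              intro hc
              apply hmem
              apply mg_eq_a_iff.mp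
              rw [← hmx, heq, hmy]
              exact mg_eq_a_iff.mpr hc
            have hfeq : (τ.map l x : ℕ) = (τ.map l y : ℕ) := by
              apply mg_inj_off (a := a)
              · rw [← hmx, ← hmy, heq]
              · rw [← hmx]
                intro hc
                exact hmem (mg_eq_a_iff.mp (by rw [← hmx]; exact hc))
            have htx := tieD_val_nomem d (show l + 1 = d.k from hl1) x hmem
            have hty := tieD_val_nomem d (show l + 1 = d.k from hl1) y hmay
            rw [htx, hty] at htie
            exact u.fiberMono l x y (Fin.ext hfeq) htie
        · have hbj1 : Function.Bijective (PTreeHom.app u (l+1)) := hbijb (l+1) (by omega)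
          have hfeq : τ.map l x = τ.map l y := hbj1.injective heqf
          have htx := tieD_val_ne d (show l + 1 ≠ d.k from hl1) x
          have hty := tieD_val_ne d (show l + 1 ≠ d.k from hl1) y
          rw [htx, hty] at htie
          exact u.fiberMono l x y hfeq htie
    have hkinj : Function.Injective (fun x : Fin (τ.t l) =>
        (PTreeHom.app u (l+1) (τ.map l x) : ℕ) * τ.t l + tieD τ d l x) := by
      apply key_inj _ _ (tieD_lt d l)
      intro x y hlabeq htieeq
      by_cases hl1 : l + 1 = k
      · have hmx : (PTreeHom.app u (l+1) (τ.map l x) : ℕ) = mg a (τ.map l x : ℕ) :=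
          hmgl (l+1) hl1 _
        have hmy : (PTreeHom.app u (l+1) (τ.map l y) : ℕ) = mg a (τ.map l y : ℕ) :=
          hmgl (l+1) hl1 _
        have hmg2 : mg a (τ.map l x : ℕ) = mg a (τ.map l y : ℕ) := by
          rw [← hmx, ← hmy, hlabeq]
        by_cases hmem : ((τ.map l x : ℕ) = a ∨ (τ.map l x : ℕ) = a + 1)
        · have hmemy : ((τ.map l y : ℕ) = a ∨ (τ.map l y : ℕ) = a + 1) :=
            mg_eq_a_iff.mp (by rw [← hmg2]; exact mg_eq_a_iff.mpr hmem)
          rw [tieD_val_mem d hl1 x hmem, tieD_val_mem d hl1 y hmemy] at htieeq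
          have := (d.shBij l hl1).injective (Fin.ext htieeq)
          exact congrArg Subtype.val this
        · have hmemy : ¬((τ.map l y : ℕ) = a ∨ (τ.map l y : ℕ) = a + 1) := by
            intro hc
            exact hmem (mg_eq_a_iff.mp (by rw [hmg2]; exact mg_eq_a_iff.mpr hc))
          rw [tieD_val_nomem d hl1 x hmem, tieD_val_nomem d hl1 y hmemy] at htieeq
          exact Fin.ext htieeq
      · have hbj1 : Function.Bijective (PTreeHom.app u (l+1)) := hbijb (l+1) (by omega)
        rw [tieD_val_ne d hl1 x, tieD_val_ne d hl1 y] at htieeq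
        exact Fin.ext htieeq
    exact le_iff_of_forall_le (PTreeHom.app u l) _
      (hbijb l hlk).injective hkinj hforall x0 y0

end Stmt2Aux

namespace Stmt2Aux

variable {n : ℕ} {τ : PTree n}

lemma data_unique (τ : PTree n) (d d' : MergeData τ)
    (p : Σ σ : PTree n, {u : τ ⟶ σ // homDeg u = 1})
    (hp : GProps τ d p) (hp' : GProps τ d' p) : d = d' := by
  classical
  have hsh1 := shiff_of_gprops hp
  have hsh2 := shiff_of_gprops hp'
  obtain ⟨ht, hmg, hid, hbij, hord⟩ := hp
  obtain ⟨ht', hmg', hid', hbij', hord'⟩ := hp'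
  have hkk : d.k = d'.k := by
    by_contra hne
    have h1 : st τ d d.k = st τ d' d.k := (ht d.k).symm.trans (ht' d.k)
    rw [st_k d, st_eq_of_ne d' hne] at h1
    have := tk_ge d
    omega
  have hmg'' : ∀ l (hl : l = d'.k) (x : Fin (τ.t l)),
      (PTreeHom.app p.2.1 l x : ℕ) = mg d'.a (x : ℕ) := by
    intro l hl; subst hl; exact hmg'
  have haa : d.a = d'.a := by
    have hda' : d'.a + 1 < τ.t d.k := by rw [hkk]; exact d'.ha
    have h3 : mg d.a (d.a+1) = mg d'.a (d.a+1) := by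
      rw [← hmg ⟨d.a+1, d.ha⟩, hmg'' d.k hkk ⟨d.a+1, d.ha⟩]
    have h4 : mg d.a (d'.a+1) = mg d'.a (d'.a+1) := by
      rw [← hmg ⟨d'.a+1, hda'⟩, hmg'' d.k hkk ⟨d'.a+1, hda'⟩]
    simp only [mg] at h3 h4
    split_ifs at h3 h4 <;> omega
  obtain ⟨k, hk1, a, ha1, hf, sh, shb, sho⟩ := d
  obtain ⟨k', hk1', a', ha1', hf', sh', shb', sho'⟩ := d'
  dsimp only at hkk haa hsh1 hsh2
  subst hkk
  subst haa
  have hsheq : sh = sh' := by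
    funext j hj x
    have hiff : ∀ x y, sh j hj x ≤ sh j hj y ↔ sh' j hj x ≤ sh' j hj y := by
      intro x y
      rw [hsh1 j hj x y, ← hsh2 j hj x y]
    exact Fin.ext (bij_unique_of_le_iff _ _ (shb j hj) (shb' j hj) hiff x)
  subst hsheq
  rfl

end Stmt2Aux


/-- degree-1 morphisms with source `τ` are in bijection with the
merge data above; the morphism associated to a datum merges the vertices
`a, a+1` at level `k`, shuffles the subtrees above them according to the given
shuffle, and is the identity on all levels `> k`; its target is uniquely
determined by the datum (this is part of the bijectivity of `e`). -/
theorem stmt_2 (n : ℕ) (hn : 1 ≤ n) (τ : PTree n) :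
    ∃ e : (Σ σ : PTree n, {u : τ ⟶ σ // homDeg u = 1}) ≃ MergeData τ,
      ∀ (σ : PTree n) (u : τ ⟶ σ) (hu : homDeg u = 1),
        -- the merged pair at level `k`, and the merge map `d_a` at level `k`:
        (∀ x : Fin (τ.t (e ⟨σ, ⟨u, hu⟩⟩).k),
          (PTreeHom.app u (e ⟨σ, ⟨u, hu⟩⟩).k x : ℕ) =
            if (x : ℕ) ≤ (e ⟨σ, ⟨u, hu⟩⟩).a then (x : ℕ) else (x : ℕ) - 1) ∧
        -- identity on all levels above `k`:
        (∀ i, (e ⟨σ, ⟨u, hu⟩⟩).k < i → ∀ x : Fin (τ.t i),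
          (PTreeHom.app u i x : ℕ) = (x : ℕ)) ∧
        -- on the level below `k`, the morphism rearranges the two fibers
        -- according to the shuffle of the datum:
        (∀ j (hj : j + 1 = (e ⟨σ, ⟨u, hu⟩⟩).k)
           (x y : {x : Fin (τ.t j) //
              (τ.map j x : ℕ) = (e ⟨σ, ⟨u, hu⟩⟩).a ∨
              (τ.map j x : ℕ) = (e ⟨σ, ⟨u, hu⟩⟩).a + 1}),
          ((e ⟨σ, ⟨u, hu⟩⟩).sh j hj x ≤ (e ⟨σ, ⟨u, hu⟩⟩).sh j hj y ↔
            PTreeHom.app u j x.val ≤ PTreeHom.app u j y.val)) := by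
  classical
  have hGex := fun d : MergeData τ => Stmt2Aux.gprops_exists τ d
  set G : MergeData τ → (Σ σ : PTree n, {u : τ ⟶ σ // homDeg u = 1}) :=
    fun d => Classical.choose (hGex d) with hG
  have hGspec : ∀ d, Stmt2Aux.GProps τ d (G d) := fun d => Classical.choose_spec (hGex d)
  have hGbij : Function.Bijective G := by
    constructor
    · intro d d' h
      have h2 := hGspec d'
      rw [← h] at h2
      exact Stmt2Aux.data_unique τ d d' (G d) (hGspec d) h2
    · intro p
      obtain ⟨σ, u, hu⟩ := p
      obtain ⟨d, hd⟩ := Stmt2Aux.extract σ u hu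
      exact ⟨d, Stmt2Aux.gprops_unique τ d (G d) ⟨σ, ⟨u, hu⟩⟩ (hGspec d) hd⟩
  refine ⟨(Equiv.ofBijective G hGbij).symm, ?_⟩
  intro σ u hu
  set d := (Equiv.ofBijective G hGbij).symm ⟨σ, ⟨u, hu⟩⟩ with hdd
  have hGd : G d = ⟨σ, ⟨u, hu⟩⟩ := (Equiv.ofBijective G hGbij).apply_symm_apply ⟨σ, ⟨u, hu⟩⟩
  have hprops := hGspec d
  rw [hGd] at hprops
  have hprops2 := hprops
  obtain ⟨ht, hmg, hid, hbij, hord⟩ := hprops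
  refine ⟨?_, ?_, ?_⟩
  · intro x
    exact hmg x
  · exact hid
  · intro j hj x y
    exact Stmt2Aux.shiff_of_gprops hprops2 j hj x y
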